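/- For even n ≥ 4, the extremal effect e_j evaluated on the extremal state ω_i satisfies ⟨e_j, ω_i⟩ = (1 + sec(π/n)·cos((2i - 2j + 1)π/n))/2, and in particular 0 ≤ ⟨e_j, ω_i⟩ ≤ 1. -/

import Mathlib

open Real

noncomputable def rn (n : ℕ) : ℝ := Real.sqrt (1 / Real.cos (π / n))

noncomputable def ωst (n : ℕ) (i : ℤ) : Fin 3 → ℝ :=
  ![rn n * Real.cos (2 * π * (i : ℝ) / n), rn n * Real.sin (2 * π * (i : ℝ) / n), 1]

noncomputable def eEv (n : ℕ) (j : ℤ) : Fin 3 → ℝ :=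
  ![rn n * Real.cos ((2 * (j : ℝ) - 1) * π / n) / 2,
    rn n * Real.sin ((2 * (j : ℝ) - 1) * π / n) / 2, 1 / 2]

noncomputable def eOd (n : ℕ) (j : ℤ) : Fin 3 → ℝ :=
  (1 / (1 + rn n ^ 2)) •
    ![rn n * Real.cos (2 * π * (j : ℝ) / n), rn n * Real.sin (2 * π * (j : ℝ) / n), 1]

noncomputable def ip (v w : Fin 3 → ℝ) : ℝ := v 0 * w 0 + v 1 * w 1 + v 2 * w 2

noncomputable def uE : Fin 3 → ℝ := ![0, 0, 1]

lemma abs_cos_odd_le (n : ℕ) (hn : Even n) (h4 : 4 ≤ n) (k : ℤ) (hk : Odd k) :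
    |Real.cos ((k : ℝ) * π / n)| ≤ Real.cos (π / n) := by
  have hn0 : (0:ℝ) < n := by positivity
  set q : ℤ := k / (2 * n) with hq
  set r : ℤ := k % (2 * n) with hr
  have h2n : (0:ℤ) < 2 * n := by positivity
  have hkeq : k = 2 * (n : ℤ) * q + r := by
    rw [hq, hr]; have := Int.emod_add_mul_ediv k (2*n); linarith
  have hr0 : 0 ≤ r := Int.emod_nonneg k (by omega)
  have hrlt : r < 2 * n := Int.emod_lt_of_pos k h2n
  have hev : Even (2 * (n:ℤ) * q) := ⟨(n:ℤ) * q, by ring⟩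
  have hrodd : Odd r := by
    rcases hk with ⟨m, hm⟩; rcases hev with ⟨p, hp⟩
    exact ⟨m - p, by omega⟩
  have hcos : Real.cos ((k : ℝ) * π / n) = Real.cos ((r : ℝ) * π / n) := by
    have hc : (k : ℝ) = 2 * n * q + r := by exact_mod_cast congrArg (Int.cast : ℤ → ℝ) hkeq
    have : (k : ℝ) * π / n = (r : ℝ) * π / n + q * (2 * π) := by
      field_simp [hc]; ring; linarith [hc]
    rw [this, Real.cos_add_int_mul_two_pi]
  rw [hcos]
  have ht : 0 < π / (n:ℝ) := by positivity
  have hnt : (n:ℝ) * (π / n) = π := by field_simp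
  have key : ∀ s : ℤ, 1 ≤ s → s ≤ (n : ℤ) - 1 → |Real.cos ((s : ℝ) * π / n)| ≤ Real.cos (π / n) := by
    intro s hs1 hs2
    have hs1' : (1:ℝ) ≤ (s:ℝ) := by exact_mod_cast hs1
    have hs2' : (s:ℝ) ≤ (n:ℝ) - 1 := by exact_mod_cast (by exact_mod_cast hs2 : (s:ℝ) ≤ ((n:ℤ):ℝ) - 1)
    have hst : (s : ℝ) * π / n = (s:ℝ) * (π / n) := by rw [mul_div_assoc]
    rw [hst]
    have h1 : π / (n:ℝ) ≤ (s:ℝ) * (π / n) := by nlinarith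
    have h2 : (s:ℝ) * (π / n) ≤ π - π / n := by nlinarith
    have hup : Real.cos ((s:ℝ) * (π / n)) ≤ Real.cos (π / n) :=
      Real.cos_le_cos_of_nonneg_of_le_pi (le_of_lt ht) (by linarith) h1
    have hlo : Real.cos (π - π / n) ≤ Real.cos ((s:ℝ) * (π / n)) :=
      Real.cos_le_cos_of_nonneg_of_le_pi (by nlinarith) (by linarith) h2
    rw [Real.cos_pi_sub] at hlo
    rw [abs_le]; exact ⟨by linarith, hup⟩
  have hne : r ≠ (n : ℤ) := by
    obtain ⟨l, hl⟩ := hn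
    rcases hrodd with ⟨m, hm⟩
    omega
  rcases lt_or_gt_of_ne hne with h | h
  · exact key r (by rcases hrodd with ⟨m,hm⟩; omega) (by omega)
  · have heq2 : Real.cos ((r : ℝ) * π / n) = Real.cos (((2*(n:ℤ) - r : ℤ) : ℝ) * π / n) := by
      have heq : ((2*(n:ℤ) - r : ℤ) : ℝ) * π / n = -((r:ℝ) * π / n) + ((1:ℤ):ℝ) * (2 * π) := by
        push_cast; field_simp; ring
      rw [heq, Real.cos_add_int_mul_two_pi, Real.cos_neg]
    rw [heq2]
    exact key _ (by omega) (by rcases hrodd with ⟨m,hm⟩; omega)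

theorem ngon_effect_state_pairing (n : ℕ) (hn : Even n) (h4 : 4 ≤ n) (i j : ℤ) :
    ip (eEv n j) (ωst n i)
      = (1 + (1 / Real.cos (π / n)) * Real.cos ((2 * (i : ℝ) - 2 * (j : ℝ) + 1) * π / n)) / 2 ∧
    0 ≤ ip (eEv n j) (ωst n i) ∧ ip (eEv n j) (ωst n i) ≤ 1 := by
  have hn0 : (0:ℝ) < n := by positivity
  have hn4 : (4:ℝ) ≤ n := by exact_mod_cast h4
  have hπ := Real.pi_pos
  have hlt : π / (n:ℝ) < π / 2 := by
    rw [div_lt_div_iff₀ hn0 (by norm_num)]; nlinarith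
  have hc : 0 < Real.cos (π / n) :=
    Real.cos_pos_of_mem_Ioo ⟨by nlinarith [div_pos hπ hn0], hlt⟩
  have hrn : rn n ^ 2 = 1 / Real.cos (π / n) := Real.sq_sqrt (by positivity)
  have hcs : Real.cos ((2 * (j:ℝ) - 1) * π / n) * Real.cos (2 * π * (i:ℝ) / n)
      + Real.sin ((2 * (j:ℝ) - 1) * π / n) * Real.sin (2 * π * (i:ℝ) / n)
      = Real.cos ((2 * (i : ℝ) - 2 * (j : ℝ) + 1) * π / n) := by
    rw [mul_comm (Real.cos _), mul_comm (Real.sin _), ← Real.cos_sub]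
    congr 1; ring
  have hmain : ip (eEv n j) (ωst n i)
      = (1 + (1 / Real.cos (π / n)) * Real.cos ((2 * (i : ℝ) - 2 * (j : ℝ) + 1) * π / n)) / 2 := by
    simp only [ip, eEv, ωst, Matrix.cons_val_zero, Matrix.cons_val_one, Matrix.head_cons,
      Matrix.cons_val_two, Matrix.tail_cons]
    linear_combination (rn n ^ 2 / 2) * hcs
      + (Real.cos ((2 * (i : ℝ) - 2 * (j : ℝ) + 1) * π / n) / 2) * hrn
  have habs : |Real.cos ((2 * (i : ℝ) - 2 * (j : ℝ) + 1) * π / n)| ≤ Real.cos (π / n) := by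
    have := abs_cos_odd_le n hn h4 (2*i - 2*j + 1) ⟨i - j, by ring⟩
    rwa [show ((2*i - 2*j + 1 : ℤ) : ℝ) = 2 * (i:ℝ) - 2 * (j:ℝ) + 1 by push_cast; ring] at this
  rw [abs_le] at habs
  have hinv : (1 / Real.cos (π / n)) * Real.cos (π / n) = 1 := by field_simp
  have hu : 0 < 1 / Real.cos (π / n) := by positivity
  refine ⟨hmain, ?_, ?_⟩ <;> rw [hmain]
  · nlinarith [mul_nonneg hu.le (by linarith : (0:ℝ) ≤ Real.cos ((2 * (i : ℝ) - 2 * (j : ℝ) + 1) * π / n) + Real.cos (π / n))]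
  · nlinarith [mul_nonneg hu.le (by linarith : (0:ℝ) ≤ Real.cos (π / n) - Real.cos ((2 * (i : ℝ) - 2 * (j : ℝ) + 1) * π / n))]
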